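/- For fixed γ ∈ (0,1), the function α ↦ ln((1-γ)/α) / ln((1-α)/γ) is monotonically decreasing on {α ∈ (0,1) : α ≠ 1-γ}. -/

import Mathlib

/-- Nonnegativity of binary KL divergence. -/
lemma kl_nonneg (p q : ℝ) (hp0 : 0 < p) (hp1 : p < 1) (hq0 : 0 < q) (hq1 : q < 1) :
    0 ≤ p * (Real.log p - Real.log q) + (1 - p) * (Real.log (1 - p) - Real.log (1 - q)) := by
  have hp1' : (0:ℝ) < 1 - p := by linarith
  have hq1' : (0:ℝ) < 1 - q := by linarith
  have h1 : Real.log (q / p) ≤ q / p - 1 := Real.log_le_sub_one_of_pos (by positivity)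
  have h2 : Real.log ((1 - q) / (1 - p)) ≤ (1 - q) / (1 - p) - 1 :=
    Real.log_le_sub_one_of_pos (by positivity)
  rw [Real.log_div hq0.ne' hp0.ne'] at h1
  rw [Real.log_div hq1'.ne' hp1'.ne'] at h2
  have e1 : p * (Real.log q - Real.log p) ≤ q - p := by
    have h := mul_le_mul_of_nonneg_left h1 hp0.le
    have e : p * (q / p - 1) = q - p := by field_simp
    linarith
  have e2 : (1 - p) * (Real.log (1 - q) - Real.log (1 - p)) ≤ p - q := by
    have h := mul_le_mul_of_nonneg_left h2 hp1'.le
    have e : (1 - p) * ((1 - q) / (1 - p) - 1) = p - q := by field_simp; ring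
    linarith
  nlinarith [e1, e2]

theorem K_alpha_anti_in_alpha (γ : ℝ) (hγ0 : 0 < γ) (hγ1 : γ < 1) :
    ∀ α₁ α₂ : ℝ, 0 < α₁ → α₁ < 1 → α₁ ≠ 1 - γ → 0 < α₂ → α₂ < 1 → α₂ ≠ 1 - γ →
      α₁ < α₂ →
      Real.log ((1 - γ) / α₂) / Real.log ((1 - α₂) / γ) ≤
        Real.log ((1 - γ) / α₁) / Real.log ((1 - α₁) / γ) := by
  have hγ1' : (0:ℝ) < 1 - γ := by linarith
  set g : ℝ → ℝ := fun α => (Real.log (1 - γ) - Real.log α) / (Real.log (1 - α) - Real.log γ)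
    with hg
  -- rewrite the statement in terms of g
  have heq : ∀ α : ℝ, 0 < α → α < 1 →
      Real.log ((1 - γ) / α) / Real.log ((1 - α) / γ) = g α := by
    intro α h0 h1
    rw [hg]
    rw [Real.log_div hγ1'.ne' h0.ne', Real.log_div (by linarith) hγ0.ne']
  -- derivative of g
  have hderiv : ∀ α : ℝ, 0 < α → α < 1 → α ≠ 1 - γ →
      HasDerivAt g (((-α⁻¹) * (Real.log (1 - α) - Real.log γ) -
        (Real.log (1 - γ) - Real.log α) * (-(1 - α)⁻¹)) /
        (Real.log (1 - α) - Real.log γ)^2) α := by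
    intro α h0 h1 hne
    have h1' : (0:ℝ) < 1 - α := by linarith
    have hN : HasDerivAt (fun x : ℝ => Real.log (1 - γ) - Real.log x) (-α⁻¹) α :=
      (Real.hasDerivAt_log h0.ne').const_sub _
    have hL : HasDerivAt (fun x : ℝ => Real.log (1 - x)) (-(1 - α)⁻¹) α := by
      have h := (Real.hasDerivAt_log h1'.ne').comp α ((hasDerivAt_id α).const_sub 1)
      simpa [Function.comp_def] using h
    have hD : HasDerivAt (fun x : ℝ => Real.log (1 - x) - Real.log γ) (-(1 - α)⁻¹) α :=
      hL.sub_const _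
    have hDne : Real.log (1 - α) - Real.log γ ≠ 0 := by
      rcases lt_or_gt_of_ne hne with h | h
      · have : Real.log γ < Real.log (1 - α) := Real.log_lt_log hγ0 (by linarith)
        linarith
      · have : Real.log (1 - α) < Real.log γ := Real.log_lt_log h1' (by linarith)
        linarith
    exact hN.div hD hDne
  -- derivative is nonpositive
  have hderiv_nonpos : ∀ α : ℝ, 0 < α → α < 1 →
      ((-α⁻¹) * (Real.log (1 - α) - Real.log γ) -
        (Real.log (1 - γ) - Real.log α) * (-(1 - α)⁻¹)) /
        (Real.log (1 - α) - Real.log γ)^2 ≤ 0 := by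
    intro α h0 h1
    have h1' : (0:ℝ) < 1 - α := by linarith
    have hkl := kl_nonneg (1 - α) γ h1' (by linarith) hγ0 hγ1
    have e : (1:ℝ) - (1 - α) = α := by ring
    rw [e] at hkl
    have key : 0 ≤ (1 - α) * (Real.log (1 - α) - Real.log γ) -
        α * (Real.log (1 - γ) - Real.log α) := by linarith
    have hpos : (0:ℝ) < α * (1 - α) := by positivity
    have hE : (-α⁻¹) * (Real.log (1 - α) - Real.log γ) -
        (Real.log (1 - γ) - Real.log α) * (-(1 - α)⁻¹) =
        -(((1 - α) * (Real.log (1 - α) - Real.log γ) -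
          α * (Real.log (1 - γ) - Real.log α)) / (α * (1 - α))) := by
      field_simp
      ring
    rw [hE]
    apply div_nonpos_of_nonpos_of_nonneg _ (sq_nonneg _)
    exact neg_nonpos_of_nonneg (div_nonneg key hpos.le)
  -- g is antitone on each side
  have hanti : ∀ s : Set ℝ, s = Set.Ioo 0 (1 - γ) ∨ s = Set.Ioo (1 - γ) 1 →
      AntitoneOn g s := by
    intro s hs
    have hsub : ∀ x ∈ s, 0 < x ∧ x < 1 ∧ x ≠ 1 - γ := by
      rcases hs with rfl | rfl <;> rintro x ⟨hx1, hx2⟩ <;>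
        exact ⟨by linarith, by linarith, by rintro rfl <;> linarith⟩
    have hconv : Convex ℝ s := by rcases hs with rfl | rfl <;> exact convex_Ioo _ _
    have hint : interior s = s := by rcases hs with rfl | rfl <;> exact interior_Ioo
    apply antitoneOn_of_deriv_nonpos hconv
    · intro x hx
      obtain ⟨h0, h1, hne⟩ := hsub x hx
      exact ((hderiv x h0 h1 hne).differentiableAt).continuousAt.continuousWithinAt
    · intro x hx
      rw [hint] at hx
      obtain ⟨h0, h1, hne⟩ := hsub x hx
      exact (hderiv x h0 h1 hne).differentiableAt.differentiableWithinAt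
    · intro x hx
      rw [hint] at hx
      obtain ⟨h0, h1, hne⟩ := hsub x hx
      rw [(hderiv x h0 h1 hne).deriv]
      exact hderiv_nonpos x h0 h1
  -- bounds across the singularity
  have hbound_lt : ∀ α : ℝ, 0 < α → α < 1 - γ → γ / (1 - γ) ≤ g α := by
    intro α h0 h1
    have hD : 0 < Real.log (1 - α) - Real.log γ := by
      have : Real.log γ < Real.log (1 - α) := Real.log_lt_log hγ0 (by linarith)
      linarith
    have hkl := kl_nonneg (1 - γ) α hγ1' (by linarith) h0 (by linarith)
    have hγe : (1:ℝ) - (1 - γ) = γ := by ring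
    rw [hγe] at hkl
    show γ / (1 - γ) ≤ (Real.log (1 - γ) - Real.log α) / (Real.log (1 - α) - Real.log γ)
    rw [div_le_div_iff₀ hγ1' hD]
    nlinarith [hkl]
  have hbound_gt : ∀ α : ℝ, 1 - γ < α → α < 1 → g α ≤ γ / (1 - γ) := by
    intro α h1 h2
    have h0 : 0 < α := by linarith
    have hD : Real.log (1 - α) - Real.log γ < 0 := by
      have : Real.log (1 - α) < Real.log γ := Real.log_lt_log (by linarith) (by linarith)
      linarith
    have hkl := kl_nonneg (1 - γ) α hγ1' (by linarith) h0 (by linarith)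
    have hγe : (1:ℝ) - (1 - γ) = γ := by ring
    rw [hγe] at hkl
    show (Real.log (1 - γ) - Real.log α) / (Real.log (1 - α) - Real.log γ) ≤ γ / (1 - γ)
    rw [div_le_iff_of_neg hD, div_mul_eq_mul_div, div_le_iff₀ hγ1']
    nlinarith [hkl]
  -- main argument
  intro α₁ α₂ h10 h11 h1ne h20 h21 h2ne hlt
  rw [heq α₁ h10 h11, heq α₂ h20 h21]
  rcases lt_or_gt_of_ne h1ne with c1 | c1 <;> rcases lt_or_gt_of_ne h2ne with c2 | c2
  · exact hanti _ (Or.inl rfl) ⟨h10, c1⟩ ⟨h20, c2⟩ hlt.le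
  · exact le_trans (hbound_gt α₂ c2 h21) (hbound_lt α₁ h10 c1)
  · exact absurd hlt (not_lt.mpr (le_of_lt (lt_trans c2 c1)))
  · exact hanti _ (Or.inr rfl) ⟨c1, h11⟩ ⟨c2, h21⟩ hlt.le
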